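/- Let (κ, τ, β, π, f) be as in the binary 5-cap setup (with β, π determined recursively from κ and τ as in the context). Let u be a word and m ≥ 0, and set w_i = uH^i for 0 ≤ i ≤ m and w = uH^m. Suppose w is m-hard, i.e., for every i with 0 ≤ i ≤ m: (H0) π_{w_i} ≥ 0; (H1) κ_{w_i} ≥ 2π_{w_i} − π_u·f_i; and (H2) τ_{w_i} ≤ 5β_{w_i} + 2π_{w_i} + π_u·f_{i+1}. Then κ_w ≥ π_u·f_{m+3}. -/
import Mathlib


/-- The two letters of binary words: `H` (high supporter) and `L` (low
supporter). -/
inductive Letter : Type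
  | H : Letter
  | L : Letter
deriving DecidableEq

/-- Binary words.  The empty list is the empty word `λ`; the word `vH`
(resp. `vL`) is represented by `Letter.H :: v` (resp. `Letter.L :: v`). -/
abbrev Word : Type := List Letter

/-- The penalty `π`, defined recursively from the heights `κ` by `π_λ = 0`,
`π_{vH} = κ_v` and `π_{vL} = κ_v - π_v`. -/
def pen (κ : Word → ℝ) : Word → ℝ
  | [] => 0
  | Letter.H :: v => κ v
  | Letter.L :: v => κ v - pen κ v

/-- The quantity `β` (weight above the cone minus own height), defined
recursively by `β_λ = 0`, `β_{vH} = β_v` and `β_{vL} = β_v + π_v`. -/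
def wt (κ : Word → ℝ) : Word → ℝ
  | [] => 0
  | Letter.H :: v => wt κ v
  | Letter.L :: v => wt κ v + pen κ v

/-- If `w = uHᵐ` is `m`-hard, i.e. for all `0 ≤ i ≤ m` the box `wᵢ = uHⁱ`
satisfies (H0) `π_{wᵢ} ≥ 0`, (H1) `κ_{wᵢ} ≥ 2π_{wᵢ} - π_u·fᵢ` and
(H2) `τ_{wᵢ} ≤ 5β_{wᵢ} + 2π_{wᵢ} + π_u·f_{i+1}`, then
`κ_w ≥ π_u·f_{m+3}` (with `f` the Fibonacci sequence). -/
theorem hard_lemma (κ τ : Word → ℝ)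
    (hτnil : τ [] = 0)
    (hτH : ∀ v : Word, τ (Letter.H :: v) = τ v + κ v)
    (u : Word) (m : ℕ)
    (hH0 : ∀ i ≤ m, 0 ≤ pen κ (List.replicate i Letter.H ++ u))
    (hH1 : ∀ i ≤ m, 2 * pen κ (List.replicate i Letter.H ++ u)
      - pen κ u * (Nat.fib i : ℝ) ≤ κ (List.replicate i Letter.H ++ u))
    (hH2 : ∀ i ≤ m, τ (List.replicate i Letter.H ++ u)
      ≤ 5 * wt κ (List.replicate i Letter.H ++ u)
        + 2 * pen κ (List.replicate i Letter.H ++ u)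
        + pen κ u * (Nat.fib (i + 1) : ℝ)) :
    pen κ u * (Nat.fib (m + 3) : ℝ) ≤ κ (List.replicate m Letter.H ++ u) := by
  induction m with
  | zero =>
    have h := hH1 0 le_rfl
    simp only [List.replicate, List.nil_append, Nat.fib_zero] at h
    have : pen κ u = pen κ (List.replicate 0 Letter.H ++ u) := by simp
    norm_num [Nat.fib] at h ⊢
    linarith
  | succ n ih =>
    have ih' := ih (fun i hi => hH0 i (hi.trans (Nat.le_succ n)))
      (fun i hi => hH1 i (hi.trans (Nat.le_succ n)))
      (fun i hi => hH2 i (hi.trans (Nat.le_succ n)))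
    have h := hH1 (n + 1) le_rfl
    rw [List.replicate_succ, List.cons_append] at h ⊢
    have hpen : pen κ (Letter.H :: (List.replicate n Letter.H ++ u))
        = κ (List.replicate n Letter.H ++ u) := rfl
    rw [hpen] at h
    have hfib : (Nat.fib (n + 1 + 3) : ℝ) = 2 * (Nat.fib (n + 3) : ℝ) - (Nat.fib (n + 1) : ℝ) := by
      have h1 : Nat.fib (n + 4) + Nat.fib (n + 1) = 2 * Nat.fib (n + 3) := by
        have e1 : Nat.fib (n + 4) = Nat.fib (n + 2) + Nat.fib (n + 3) := Nat.fib_add_two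
        have e2 : Nat.fib (n + 3) = Nat.fib (n + 1) + Nat.fib (n + 2) := Nat.fib_add_two
        omega
      have h2 : ((Nat.fib (n + 4) + Nat.fib (n + 1) : ℕ) : ℝ) = ((2 * Nat.fib (n + 3) : ℕ) : ℝ) := by
        rw [h1]
      push_cast at h2
      show (Nat.fib (n + 4) : ℝ) = _
      linarith
    rw [hfib]
    linarith
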